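/- A finite simple graph G has an f-coloring if and only if there exists a common denominator N of f such that G has an (f,N)-coloring. -/

import Mathlib

open MeasureTheory ENNReal

/-- `φ` is an `f`-coloring of `G`: it assigns to each vertex a measurable subset of `[0,1]`,
adjacent vertices get disjoint sets, and the set of `v` has measure at least `f v`. -/
def IsFracColoring {V : Type*} (G : SimpleGraph V) (f : V → ℚ) (φ : V → Set ℝ) : Prop :=
  (∀ v, φ v ⊆ Set.Icc (0 : ℝ) 1) ∧
  (∀ v, MeasurableSet (φ v)) ∧
  (∀ u v, G.Adj u v → φ u ∩ φ v = ∅) ∧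
  (∀ v, ENNReal.ofReal ((f v : ℝ)) ≤ volume (φ v))

/-- A tight `f`-coloring: the measure of each `φ v` equals `f v`. -/
def IsTightFracColoring {V : Type*} (G : SimpleGraph V) (f : V → ℚ) (φ : V → Set ℝ) : Prop :=
  IsFracColoring G f φ ∧ ∀ v, volume (φ v) = ENNReal.ofReal ((f v : ℝ))

/-- `N ≥ 1` is a common denominator of `f` if `N * f v` is an integer for every `v`. -/
def IsCommonDenom {V : Type*} (N : ℕ) (f : V → ℚ) : Prop :=
  1 ≤ N ∧ ∀ v, ∃ m : ℤ, (N : ℚ) * f v = (m : ℚ)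

/-- `ψ` is an `(f,N)`-coloring of `G`: each vertex gets a subset of `{1,…,N}`,
adjacent vertices get disjoint sets, and `|ψ v| ≥ N * f v` for every vertex `v`. -/
def IsFNColoring {V : Type*} (G : SimpleGraph V) (f : V → ℚ) (N : ℕ) (ψ : V → Finset ℕ) : Prop :=
  (∀ v, ψ v ⊆ Finset.Icc 1 N) ∧
  (∀ u v, G.Adj u v → Disjoint (ψ u) (ψ v)) ∧
  (∀ v, (N : ℚ) * f v ≤ ((ψ v).card : ℚ))

/-- A tight `(f,N)`-coloring: `|ψ v| = N * f v` for every vertex `v`. -/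
def IsTightFNColoring {V : Type*} (G : SimpleGraph V) (f : V → ℚ) (N : ℕ)
    (ψ : V → Finset ℕ) : Prop :=
  IsFNColoring G f N ψ ∧ ∀ v, ((ψ v).card : ℚ) = (N : ℚ) * f v



/-- Fourier–Motzkin: a finite system of rational linear inequalities solvable
over `ℝ` is solvable over `ℚ`. -/
lemma fm : ∀ (n : ℕ) (κ : Type*) [Fintype κ] (c : κ → Fin n → ℚ) (b : κ → ℚ),
    (∃ x : Fin n → ℝ, ∀ k, (b k : ℝ) ≤ ∑ i, (c k i : ℝ) * x i) →
    ∃ q : Fin n → ℚ, ∀ k, b k ≤ ∑ i, c k i * q i := by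
  intro n
  induction n with
  | zero =>
    intro κ _ c b ⟨x, hx⟩
    refine ⟨0, fun k => ?_⟩
    have := hx k
    simp only [Finset.univ_eq_empty, Finset.sum_empty] at this ⊢
    exact_mod_cast this
  | succ n ih =>
    intro κ _ c b ⟨x, hx⟩
    classical
    -- reduced system index
    set κ' := {k : κ // c k 0 = 0} ⊕ ({k : κ // 0 < c k 0} × {k : κ // c k 0 < 0}) with hκ'
    let c' : κ' → Fin n → ℚ := fun k' i =>
      match k' with
      | .inl k => c k.1 i.succ
      | .inr (k, l) => c k.1 i.succ / c k.1 0 - c l.1 i.succ / c l.1 0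
    let b' : κ' → ℚ := fun k' =>
      match k' with
      | .inl k => b k.1
      | .inr (k, l) => b k.1 / c k.1 0 - b l.1 / c l.1 0
    -- the tail of x solves the reduced system over ℝ
    have hsum : ∀ k, (b k : ℝ) ≤ (c k 0 : ℝ) * x 0 + ∑ i : Fin n, (c k i.succ : ℝ) * x i.succ := by
      intro k
      have := hx k
      rwa [Fin.sum_univ_succ] at this
    have hred : ∃ y : Fin n → ℝ, ∀ k', (b' k' : ℝ) ≤ ∑ i, (c' k' i : ℝ) * y i := by
      refine ⟨fun i => x i.succ, fun k' => ?_⟩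
      match k' with
      | .inl k =>
        have h := hsum k.1
        rw [k.2] at h
        push_cast at h ⊢
        simpa using h
      | .inr (k, l) =>
        have hk : (0:ℝ) < (c k.1 0 : ℝ) := by exact_mod_cast k.2
        have hl : ((c l.1 0 : ℚ):ℝ) < 0 := by exact_mod_cast l.2
        set sk : ℝ := ∑ i : Fin n, (c k.1 i.succ : ℝ) * x i.succ with hsk
        set sl : ℝ := ∑ i : Fin n, (c l.1 i.succ : ℝ) * x i.succ with hsl
        have h1 : ((b k.1:ℝ) - sk) / (c k.1 0 : ℝ) ≤ x 0 := by
          rw [div_le_iff₀ hk]; have := hsum k.1; linarith [mul_comm (x 0) ((c k.1 0 : ℚ):ℝ)]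
        have h2 : x 0 ≤ ((b l.1:ℝ) - sl) / (c l.1 0 : ℝ) := by
          rw [le_div_iff_of_neg hl]; have := hsum l.1; linarith [mul_comm (x 0) ((c l.1 0 : ℚ):ℝ)]
        have h3 := h1.trans h2
        have e1 : ∑ i : Fin n, (c' (.inr (k,l)) i : ℝ) * x i.succ
            = sk / (c k.1 0 : ℝ) - sl / (c l.1 0 : ℝ) := by
          rw [hsk, hsl, Finset.sum_div, Finset.sum_div, ← Finset.sum_sub_distrib]
          refine Finset.sum_congr rfl fun i _ => ?_
          show ((c k.1 i.succ / c k.1 0 - c l.1 i.succ / c l.1 0 : ℚ) : ℝ) * x i.succ = _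
          push_cast
          ring
        show ((b k.1 / c k.1 0 - b l.1 / c l.1 0 : ℚ) : ℝ) ≤ _
        rw [e1]
        push_cast
        rw [sub_div, sub_div] at h3
        linarith
    obtain ⟨q', hq'⟩ := ih κ' c' b' hred
    -- choose a value for the first variable
    let s : κ → ℚ := fun k => ∑ i : Fin n, c k i.succ * q' i
    let L : Finset ℚ := Finset.univ.image (fun k : {k : κ // 0 < c k 0} => (b k.1 - s k.1) / c k.1 0)
    let U : Finset ℚ := Finset.univ.image (fun l : {k : κ // c k 0 < 0} => (b l.1 - s l.1) / c l.1 0)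
    have key : ∀ a ∈ L, ∀ u ∈ U, a ≤ u := by
      intro a ha u hu
      simp only [L, U, Finset.mem_image, Finset.mem_univ, true_and] at ha hu
      obtain ⟨k, rfl⟩ := ha
      obtain ⟨l, rfl⟩ := hu
      have h := hq' (.inr (k, l))
      have e1 : ∑ i : Fin n, c' (.inr (k,l)) i * q' i = s k.1 / c k.1 0 - s l.1 / c l.1 0 := by
        simp only [s, Finset.sum_div, ← Finset.sum_sub_distrib]
        refine Finset.sum_congr rfl fun i _ => ?_
        show (c k.1 i.succ / c k.1 0 - c l.1 i.succ / c l.1 0) * q' i = _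
        ring
      rw [show b' (.inr (k,l)) = b k.1 / c k.1 0 - b l.1 / c l.1 0 from rfl, e1] at h
      rw [sub_div, sub_div]
      linarith
    by_cases hL : L.Nonempty
    · refine ⟨Fin.cons (L.max' hL) q', fun k => ?_⟩
      have hsum' : ∑ i, c k i * (Fin.cons (L.max' hL) q' : Fin (n+1) → ℚ) i
          = c k 0 * L.max' hL + s k := by
        rw [Fin.sum_univ_succ]; simp [s]
      rw [hsum']
      rcases lt_trichotomy (c k 0) 0 with h0 | h0 | h0
      · have hmem : (b k - s k) / c k 0 ∈ U := Finset.mem_image_of_mem _ (Finset.mem_univ (⟨k, h0⟩ : {k : κ // c k 0 < 0}))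
        have := key _ (L.max'_mem hL) _ hmem
        rw [le_div_iff_of_neg h0] at this
        linarith [mul_comm (L.max' hL) (c k 0)]
      · have h := hq' (.inl ⟨k, h0⟩)
        have e1 : ∑ i : Fin n, c' (.inl ⟨k, h0⟩) i * q' i = s k := rfl
        rw [show b' (.inl ⟨k, h0⟩) = b k from rfl, e1] at h
        rw [h0]; linarith
      · have hmem : (b k - s k) / c k 0 ∈ L := Finset.mem_image_of_mem _ (Finset.mem_univ (⟨k, h0⟩ : {k : κ // 0 < c k 0}))
        have := L.le_max' _ hmem
        rw [div_le_iff₀ h0] at this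
        linarith [mul_comm ((b k - s k) / c k 0) (c k 0)]
    · -- no lower bounds
      by_cases hU : U.Nonempty
      · refine ⟨Fin.cons (U.min' hU) q', fun k => ?_⟩
        have hsum' : ∑ i, c k i * (Fin.cons (U.min' hU) q' : Fin (n+1) → ℚ) i
            = c k 0 * U.min' hU + s k := by
          rw [Fin.sum_univ_succ]; simp [s]
        rw [hsum']
        rcases lt_trichotomy (c k 0) 0 with h0 | h0 | h0
        · have hmem : (b k - s k) / c k 0 ∈ U := Finset.mem_image_of_mem _ (Finset.mem_univ (⟨k, h0⟩ : {k : κ // c k 0 < 0}))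
          have := U.min'_le _ hmem
          rw [le_div_iff_of_neg h0] at this
          linarith
        · have h := hq' (.inl ⟨k, h0⟩)
          have e1 : ∑ i : Fin n, c' (.inl ⟨k, h0⟩) i * q' i = s k := rfl
          rw [show b' (.inl ⟨k, h0⟩) = b k from rfl, e1] at h
          rw [h0]; linarith
        · exact absurd ⟨_, Finset.mem_image_of_mem _ (Finset.mem_univ (⟨k, h0⟩ : {k : κ // 0 < c k 0}))⟩ hL
      · refine ⟨Fin.cons 0 q', fun k => ?_⟩
        have hsum' : ∑ i, c k i * (Fin.cons 0 q' : Fin (n+1) → ℚ) i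
            = c k 0 * 0 + s k := by
          rw [Fin.sum_univ_succ]; simp [s]
        rw [hsum']
        rcases lt_trichotomy (c k 0) 0 with h0 | h0 | h0
        · exact absurd ⟨_, Finset.mem_image_of_mem _ (Finset.mem_univ (⟨k, h0⟩ : {k : κ // c k 0 < 0}))⟩ hU
        · have h := hq' (.inl ⟨k, h0⟩)
          have e1 : ∑ i : Fin n, c' (.inl ⟨k, h0⟩) i * q' i = s k := rfl
          rw [show b' (.inl ⟨k, h0⟩) = b k from rfl, e1] at h
          linarith
        · exact absurd ⟨_, Finset.mem_image_of_mem _ (Finset.mem_univ (⟨k, h0⟩ : {k : κ // 0 < c k 0}))⟩ hL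

lemma fm' (ι : Type*) (κ : Type*) [Fintype ι] [Fintype κ] (c : κ → ι → ℚ) (b : κ → ℚ)
    (h : ∃ x : ι → ℝ, ∀ k, (b k : ℝ) ≤ ∑ i, (c k i : ℝ) * x i) :
    ∃ q : ι → ℚ, ∀ k, b k ≤ ∑ i, c k i * q i := by
  classical
  obtain ⟨x, hx⟩ := h
  set e := Fintype.equivFin ι with he
  obtain ⟨q, hq⟩ := fm (Fintype.card ι) κ
    (fun k j => c k (e.symm j)) (fun k => b k)
    ⟨fun j => x (e.symm j), fun k => by
      have h2 : ∑ j : Fin (Fintype.card ι), (c k (e.symm j) : ℝ) * x (e.symm j)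
          = ∑ i : ι, (c k i : ℝ) * x i := Fintype.sum_equiv e.symm _ _ (fun j => rfl)
      dsimp only
      rw [h2]
      exact hx k⟩
  refine ⟨fun i => q (e i), fun k => ?_⟩
  have h2 : ∑ j : Fin (Fintype.card ι), c k (e.symm j) * q j
      = ∑ i : ι, c k i * q (e i) := by
    refine Fintype.sum_equiv e.symm _ _ (fun j => ?_)
    rw [Equiv.apply_symm_apply]
  have := hq k
  rw [h2] at this
  exact this

lemma den_dvd_int (r : ℚ) (k : ℕ) (h : r.den ∣ k) : ∃ z : ℤ, (k:ℚ) * r = (z:ℚ) := by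
  obtain ⟨m, hm⟩ := h
  refine ⟨(m : ℤ) * r.num, ?_⟩
  have key : (r.den : ℚ) * r = (r.num : ℚ) := by
    rw [mul_comm]
    exact (eq_div_iff (by exact_mod_cast r.den_ne_zero : ((r.den:ℚ)) ≠ 0)).mp
      (Rat.num_div_den r).symm
  subst hm
  push_cast
  linear_combination (m : ℚ) * key

lemma backward_dir {V : Type*} [Fintype V] (G : SimpleGraph V) (f : V → ℚ)
    (N : ℕ) (hN : 1 ≤ N) (ψ : V → Finset ℕ) (h : IsFNColoring G f N ψ) :
    ∃ φ, IsFracColoring G f φ := by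
  classical
  obtain ⟨hsub, hdisj, hcard⟩ := h
  have hN0 : (0:ℝ) < N := by exact_mod_cast hN
  set I : ℕ → Set ℝ := fun i => Set.Ico (((i:ℝ)-1)/N) ((i:ℝ)/N) with hI
  have hIdisj : ∀ i j : ℕ, i < j → Disjoint (I i) (I j) := by
    intro i j hij
    rw [Set.disjoint_left]
    rintro x ⟨_, hx2⟩ ⟨hx3, _⟩
    have h1 : (i:ℝ) + 1 ≤ (j:ℝ) := by exact_mod_cast hij
    have h2 : (i:ℝ)/N ≤ ((j:ℝ)-1)/N := by gcongr; linarith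
    linarith
  have hIdisj' : ∀ i j : ℕ, i ≠ j → Disjoint (I i) (I j) := by
    intro i j hij
    rcases hij.lt_or_gt with h | h
    · exact hIdisj i j h
    · exact (hIdisj j i h).symm
  refine ⟨fun v => ⋃ i ∈ ψ v, I i, ?_, ?_, ?_, ?_⟩
  · intro v x hx
    simp only [Set.mem_iUnion] at hx
    obtain ⟨i, hi, hx1, hx2⟩ := hx
    have h1 : 1 ≤ i ∧ i ≤ N := Finset.mem_Icc.mp (hsub v hi)
    have hi1 : (1:ℝ) ≤ i := by exact_mod_cast h1.1
    have hiN : (i:ℝ) ≤ N := by exact_mod_cast h1.2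
    constructor
    · calc (0:ℝ) ≤ ((i:ℝ)-1)/N := div_nonneg (by linarith) hN0.le
        _ ≤ x := hx1
    · calc x ≤ (i:ℝ)/N := le_of_lt hx2
        _ ≤ 1 := by rw [div_le_one hN0]; exact hiN
  · intro v
    exact (ψ v).measurableSet_biUnion (fun i _ => measurableSet_Ico)
  · intro u v huv
    rw [Set.eq_empty_iff_forall_notMem]
    rintro x ⟨hxu, hxv⟩
    simp only [Set.mem_iUnion] at hxu hxv
    obtain ⟨i, hi, hxi⟩ := hxu
    obtain ⟨j, hj, hxj⟩ := hxv
    have hij : i ≠ j := fun h => (Finset.disjoint_left.mp (hdisj u v huv) hi) (h ▸ hj)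
    exact Set.disjoint_left.mp (hIdisj' i j hij) hxi hxj
  · intro v
    have hvol : volume (⋃ i ∈ ψ v, I i) = ∑ i ∈ ψ v, volume (I i) :=
      measure_biUnion_finset (fun i _ j _ hij => hIdisj' i j hij) (fun i _ => measurableSet_Ico)
    have hIvol : ∀ i : ℕ, volume (I i) = ENNReal.ofReal (1/N) := by
      intro i
      rw [hI]
      rw [Real.volume_Ico]
      congr 1
      field_simp
      ring
    rw [hvol]
    simp only [hIvol, Finset.sum_const, nsmul_eq_mul]
    rw [← ENNReal.ofReal_natCast, ← ENNReal.ofReal_mul (by positivity)]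
    apply ENNReal.ofReal_le_ofReal
    have hq : f v ≤ ((ψ v).card : ℚ) / N := by
      rw [le_div_iff₀ (by exact_mod_cast hN : (0:ℚ) < N)]
      linarith [hcard v]
    calc ((f v : ℝ)) ≤ ((ψ v).card : ℝ) / N := by
          have := (Rat.cast_le (K := ℝ)).mpr hq
          push_cast at this
          exact this
      _ = ((ψ v).card : ℝ) * (1/N) := by ring

lemma forward_dir {V : Type*} [Fintype V] (G : SimpleGraph V) (f : V → ℚ)
    (hf : ∀ v, 0 ≤ f v ∧ f v ≤ 1) (φ : V → Set ℝ) (h : IsFracColoring G f φ) :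
    ∃ N : ℕ, IsCommonDenom N f ∧ ∃ ψ, IsFNColoring G f N ψ := by
  classical
  obtain ⟨hIcc, hmeas, hadj, hvol⟩ := h
  -- atoms
  set A : Finset V → Set ℝ := fun S => ⋂ u : V, (if u ∈ S then φ u else (φ u)ᶜ) with hA
  have hAmem : ∀ S x, x ∈ A S ↔ ∀ u : V, (if u ∈ S then x ∈ φ u else x ∉ φ u) := by
    intro S x
    rw [hA]
    simp only [Set.mem_iInter]
    constructor
    · intro hx u
      have := hx u
      split_ifs with h
      · rwa [if_pos h] at this
      · rwa [if_neg h] at this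
    · intro hx u
      have := hx u
      split_ifs at this with h
      · rw [if_pos h]; exact this
      · rw [if_neg h]; exact this
  have hAmeas : ∀ S, MeasurableSet (A S) := by
    intro S
    rw [hA]
    refine MeasurableSet.iInter fun u => ?_
    split_ifs
    · exact hmeas u
    · exact (hmeas u).compl
  have hAsub : ∀ S, ∀ v ∈ S, A S ⊆ φ v := by
    intro S v hv x hx
    have := (hAmem S x).mp hx v
    rwa [if_pos hv] at this
  have hAcomp : ∀ S v, v ∉ S → A S ⊆ (φ v)ᶜ := by
    intro S v hv x hx
    have := (hAmem S x).mp hx v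
    rwa [if_neg hv] at this
  have hApair : ∀ S T : Finset V, S ≠ T → Disjoint (A S) (A T) := by
    intro S T hST
    have : (∃ v, v ∈ S ∧ v ∉ T) ∨ (∃ v, v ∈ T ∧ v ∉ S) := by
      by_contra hc
      push_neg at hc
      exact hST (Finset.Subset.antisymm (fun v hv => hc.1 v hv) (fun v hv => hc.2 v hv))
    rcases this with ⟨v, hv1, hv2⟩ | ⟨v, hv1, hv2⟩
    · exact Set.disjoint_left.mpr fun x hx hx' => (hAcomp T v hv2 hx') (hAsub S v hv1 hx)
    · exact Set.disjoint_left.mpr fun x hx hx' => (hAcomp S v hv2 hx) (hAsub T v hv1 hx')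
  -- independent nonempty subsets
  let ι := {S : Finset V // S.Nonempty ∧ ∀ u ∈ S, ∀ w ∈ S, ¬ G.Adj u w}
  have hcover : ∀ v, φ v = ⋃ i ∈ Finset.univ.filter (fun i : ι => v ∈ i.1), A i.1 := by
    intro v
    ext x
    constructor
    · intro hx
      set S : Finset V := Finset.univ.filter (fun u => x ∈ φ u) with hS
      have hmemS : ∀ u, u ∈ S ↔ x ∈ φ u := by
        intro u; simp [hS]
      have hxS : x ∈ A S := by
        rw [hAmem S x]
        intro u
        split_ifs with h
        · exact (hmemS u).mp h
        · exact fun hc => h ((hmemS u).mpr hc)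
      have hSne : S.Nonempty := ⟨v, (hmemS v).mpr hx⟩
      have hSind : ∀ u ∈ S, ∀ w ∈ S, ¬ G.Adj u w := by
        intro u hu w hw hadj'
        have : x ∈ φ u ∩ φ w := ⟨(hmemS u).mp hu, (hmemS w).mp hw⟩
        rw [hadj u w hadj'] at this
        exact this
      refine Set.mem_iUnion₂.mpr ⟨⟨S, hSne, hSind⟩, ?_, hxS⟩
      simp only [Finset.mem_filter, Finset.mem_univ, true_and]
      exact (hmemS v).mpr hx
    · intro hx
      obtain ⟨i, hi, hxi⟩ := Set.mem_iUnion₂.mp hx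
      simp only [Finset.mem_filter, Finset.mem_univ, true_and] at hi
      exact hAsub i.1 v hi hxi
  have hA1 : ∀ i : ι, A i.1 ⊆ Set.Icc (0:ℝ) 1 := by
    intro i
    obtain ⟨v, hv⟩ := i.2.1
    exact (hAsub i.1 v hv).trans (hIcc v)
  set t : ι → ℝ≥0∞ := fun i => volume (A i.1) with ht
  have hIccvol : volume (Set.Icc (0:ℝ) 1) = 1 := by
    rw [Real.volume_Icc]; norm_num
  have ht_le : ∀ i, t i ≤ 1 := by
    intro i
    calc t i ≤ volume (Set.Icc (0:ℝ) 1) := measure_mono (hA1 i)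
      _ = 1 := hIccvol
  have hpd : ∀ (s : Finset ι), ((s : Set ι)).PairwiseDisjoint (fun i : ι => A i.1) := by
    intro s i _ j _ hij
    exact hApair i.1 j.1 (fun hc => hij (Subtype.ext hc))
  have hvolv : ∀ v, volume (φ v) =
      ∑ i ∈ Finset.univ.filter (fun i : ι => v ∈ i.1), t i := by
    intro v
    rw [hcover v]
    exact measure_biUnion_finset (hpd _) (fun i _ => hAmeas i.1)
  have hsum_le : ∑ i : ι, t i ≤ 1 := by
    rw [← measure_biUnion_finset (hpd Finset.univ) (fun i _ => hAmeas i.1)]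
    refine le_trans (measure_mono ?_) hIccvol.le
    exact Set.iUnion₂_subset fun i _ => hA1 i
  -- real feasible point
  set x : ι → ℝ := fun i => (t i).toReal with hxdef
  have htne : ∀ i, t i ≠ ⊤ := fun i => ((ht_le i).trans_lt (by norm_num)).ne
  have hxsum : ∑ i : ι, x i ≤ 1 := by
    have h1 := ENNReal.toReal_mono (by norm_num) hsum_le
    rwa [ENNReal.toReal_sum (fun i _ => htne i), ENNReal.toReal_one] at h1
  have hφfin : ∀ v, volume (φ v) ≠ ⊤ := by
    intro v
    have : volume (φ v) ≤ 1 := (measure_mono (hIcc v)).trans hIccvol.le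
    exact (this.trans_lt (by norm_num)).ne
  have hxcov : ∀ v, (f v : ℝ) ≤ ∑ i ∈ Finset.univ.filter (fun i : ι => v ∈ i.1), x i := by
    intro v
    have h1 := ENNReal.toReal_mono (hφfin v) (hvol v)
    rwa [ENNReal.toReal_ofReal (by exact_mod_cast (hf v).1), hvolv v,
      ENNReal.toReal_sum (fun i _ => htne i)] at h1
  -- the linear program
  set c : (ι ⊕ (Unit ⊕ V)) → ι → ℚ := fun k => match k with
    | .inl i => fun i' => if i' = i then 1 else 0
    | .inr (.inl _) => fun _ => -1
    | .inr (.inr v) => fun i => if v ∈ i.1 then 1 else 0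
    with hc
  set b : (ι ⊕ (Unit ⊕ V)) → ℚ := fun k => match k with
    | .inl _ => 0
    | .inr (.inl _) => -1
    | .inr (.inr v) => f v
    with hb
  have hfeas : ∃ xx : ι → ℝ, ∀ k, (b k : ℝ) ≤ ∑ i, (c k i : ℝ) * xx i := by
    refine ⟨x, fun k => ?_⟩
    match k with
    | .inl i =>
      have e : ∀ i' : ι, ((c (.inl i) i' : ℚ) : ℝ) * x i' = if i' = i then x i' else 0 := by
        intro i'
        show ((if i' = i then (1:ℚ) else 0 : ℚ) : ℝ) * x i' = _
        split_ifs <;> simp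
      rw [Finset.sum_congr rfl fun i' _ => e i', Finset.sum_ite_eq' Finset.univ i x]
      simp only [Finset.mem_univ, if_true]
      show ((0:ℚ):ℝ) ≤ x i
      push_cast
      exact ENNReal.toReal_nonneg
    | .inr (.inl u) =>
      have e : ∀ i : ι, ((c (.inr (.inl u)) i : ℚ) : ℝ) * x i = -(x i) := by
        intro i
        show (((-1:ℚ)) : ℝ) * x i = _
        push_cast
        ring
      rw [Finset.sum_congr rfl fun i _ => e i, Finset.sum_neg_distrib]
      show ((-1:ℚ):ℝ) ≤ -∑ i : ι, x i
      push_cast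
      linarith
    | .inr (.inr v) =>
      have e : ∀ i : ι, ((c (.inr (.inr v)) i : ℚ) : ℝ) * x i = if v ∈ i.1 then x i else 0 := by
        intro i
        show ((if v ∈ i.1 then (1:ℚ) else 0 : ℚ) : ℝ) * x i = _
        split_ifs <;> simp
      rw [Finset.sum_congr rfl fun i _ => e i, ← Finset.sum_filter]
      exact hxcov v
  obtain ⟨q, hq⟩ := fm' ι _ c b hfeas
  have hq0 : ∀ i, 0 ≤ q i := by
    intro i
    have h1 := hq (.inl i)
    have e : ∀ i' : ι, c (.inl i) i' * q i' = if i' = i then q i' else 0 := by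
      intro i'
      show (if i' = i then (1:ℚ) else 0) * q i' = _
      split_ifs <;> simp
    rwa [Finset.sum_congr rfl fun i' _ => e i', Finset.sum_ite_eq' Finset.univ i q,
      if_pos (Finset.mem_univ i)] at h1
  have hq1 : ∑ i : ι, q i ≤ 1 := by
    have h1 := hq (.inr (.inl ()))
    have e : ∀ i : ι, c (.inr (.inl ())) i * q i = -(q i) := by
      intro i
      show (-1 : ℚ) * q i = _
      ring
    rw [Finset.sum_congr rfl fun i _ => e i, Finset.sum_neg_distrib] at h1
    have : (b (.inr (.inl ())) : ℚ) = -1 := rfl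
    rw [this] at h1
    linarith
  have hqc : ∀ v, f v ≤ ∑ i ∈ Finset.univ.filter (fun i : ι => v ∈ i.1), q i := by
    intro v
    have h1 := hq (.inr (.inr v))
    have e : ∀ i : ι, c (.inr (.inr v)) i * q i = if v ∈ i.1 then q i else 0 := by
      intro i
      show (if v ∈ i.1 then (1:ℚ) else 0) * q i = _
      split_ifs <;> simp
    rwa [Finset.sum_congr rfl fun i _ => e i, ← Finset.sum_filter] at h1
  -- common denominator
  set N : ℕ := (∏ i : ι, (q i).den) * ∏ v : V, (f v).den with hN
  have hNden_q : ∀ i : ι, (q i).den ∣ N :=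
    fun i => Dvd.dvd.mul_right (Finset.dvd_prod_of_mem _ (Finset.mem_univ i)) _
  have hNden_f : ∀ v : V, (f v).den ∣ N :=
    fun v => Dvd.dvd.mul_left (Finset.dvd_prod_of_mem _ (Finset.mem_univ v)) _
  have hN1 : 1 ≤ N := by
    have h1 : 0 < ∏ i : ι, (q i).den := Finset.prod_pos fun i _ => (q i).pos
    have h2 : 0 < ∏ v : V, (f v).den := Finset.prod_pos fun v _ => (f v).pos
    exact Nat.one_le_iff_ne_zero.mpr (Nat.mul_ne_zero h1.ne' h2.ne')
  -- integer weights
  have hmex : ∀ i : ι, ∃ mi : ℕ, (mi : ℚ) = (N:ℚ) * q i := by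
    intro i
    obtain ⟨z, hz⟩ := den_dvd_int (q i) N (hNden_q i)
    have hz0 : 0 ≤ z := by
      have h2 : (0:ℚ) ≤ (z:ℚ) := by
        rw [← hz]
        exact mul_nonneg (by positivity) (hq0 i)
      exact_mod_cast h2
    refine ⟨z.toNat, ?_⟩
    rw [hz]
    exact_mod_cast Int.toNat_of_nonneg hz0
  choose m hm using hmex
  set e : ι ≃ Fin (Fintype.card ι) := Fintype.equivFin ι with he
  set o : ℕ → ℕ := fun jb => ∑ i ∈ Finset.univ.filter (fun i : ι => (e i : ℕ) < jb), m i with ho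
  set block : ι → Finset ℕ := fun i => Finset.Icc (o (e i) + 1) (o (e i) + m i) with hblock
  have hbcard : ∀ i, (block i).card = m i := by
    intro i
    simp only [hblock, Nat.card_Icc]
    omega
  have e1 : ∀ i : ι, ∑ i' ∈ insert i (Finset.univ.filter (fun i' : ι => (e i' : ℕ) < (e i : ℕ))), m i'
      = o (e i) + m i := by
    intro i
    rw [Finset.sum_insert (by simp)]
    simp only [ho]
    exact Nat.add_comm _ _
  have hsubsum : ∀ (i : ι) (jb : ℕ), (e i : ℕ) < jb → o (e i) + m i ≤ o jb := by
    intro i jb hjb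
    rw [← e1 i]
    simp only [ho]
    refine Finset.sum_le_sum_of_subset ?_
    intro i' hi'
    rcases Finset.mem_insert.mp hi' with rfl | hi'
    · simp [hjb]
    · simp only [Finset.mem_filter, Finset.mem_univ, true_and] at hi' ⊢
      omega
  have htotQ : ((∑ i' : ι, m i' : ℕ) : ℚ) ≤ (N:ℚ) := by
    rw [Nat.cast_sum, Finset.sum_congr rfl fun i' _ => hm i', ← Finset.mul_sum]
    calc (N:ℚ) * ∑ i', q i' ≤ (N:ℚ) * 1 :=
          mul_le_mul_of_nonneg_left hq1 (by positivity)
      _ = N := mul_one _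
  have htotN : ∑ i' : ι, m i' ≤ N := by exact_mod_cast htotQ
  have htot : ∀ i : ι, o (e i) + m i ≤ N := by
    intro i
    calc o (e i) + m i = _ := (e1 i).symm
      _ ≤ ∑ i' : ι, m i' := Finset.sum_le_sum_of_subset (Finset.subset_univ _)
      _ ≤ N := htotN
  have hbdisj' : ∀ i i' : ι, (e i : ℕ) < (e i' : ℕ) → Disjoint (block i) (block i') := by
    intro i i' hlt
    have hkey := hsubsum i (e i') hlt
    rw [Finset.disjoint_left]
    intro a ha ha'
    simp only [hblock, Finset.mem_Icc] at ha ha'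
    omega
  have hbdisj : ∀ i i' : ι, i ≠ i' → Disjoint (block i) (block i') := by
    intro i i' hne
    have hee : (e i : ℕ) ≠ (e i' : ℕ) := by
      intro hc
      exact hne (e.injective (Fin.val_injective hc))
    rcases hee.lt_or_gt with hlt | hlt
    · exact hbdisj' i i' hlt
    · exact (hbdisj' i' i hlt).symm
  set ψ : V → Finset ℕ := fun v => (Finset.univ.filter (fun i : ι => v ∈ i.1)).biUnion block
    with hψ
  refine ⟨N, ⟨hN1, fun v => den_dvd_int (f v) N (hNden_f v)⟩, ψ, ?_, ?_, ?_⟩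
  · intro v a ha
    simp only [hψ, Finset.mem_biUnion, Finset.mem_filter, Finset.mem_univ, true_and] at ha
    obtain ⟨i, hi, hai⟩ := ha
    simp only [hblock, Finset.mem_Icc] at hai
    rw [Finset.mem_Icc]
    exact ⟨by omega, le_trans hai.2 (htot i)⟩
  · intro u v huv
    rw [Finset.disjoint_left]
    intro a hau hav
    simp only [hψ, Finset.mem_biUnion, Finset.mem_filter, Finset.mem_univ, true_and] at hau hav
    obtain ⟨i, hi, hai⟩ := hau
    obtain ⟨i', hi', hai'⟩ := hav
    by_cases hii : i = i'
    · subst hii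
      exact i.2.2 u hi v hi' huv
    · exact Finset.disjoint_left.mp (hbdisj i i' hii) hai hai'
  · intro v
    have hcard : (ψ v).card = ∑ i ∈ Finset.univ.filter (fun i : ι => v ∈ i.1), m i := by
      simp only [hψ]
      rw [Finset.card_biUnion (fun i _ i' _ hne => hbdisj i i' hne)]
      exact Finset.sum_congr rfl fun i _ => hbcard i
    rw [hcard, Nat.cast_sum, Finset.sum_congr rfl fun i _ => hm i, ← Finset.mul_sum]
    exact mul_le_mul_of_nonneg_left (hqc v) (by positivity)

/-- `G` has an `f`-coloring iff there is a common denominator `N` of `f` such that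
`G` has an `(f,N)`-coloring. -/
theorem stmt1 {V : Type*} [Fintype V] (G : SimpleGraph V) (f : V → ℚ)
    (hf : ∀ v, 0 ≤ f v ∧ f v ≤ 1) :
    (∃ φ, IsFracColoring G f φ) ↔
      (∃ N : ℕ, IsCommonDenom N f ∧ ∃ ψ, IsFNColoring G f N ψ) := by
  constructor
  · rintro ⟨φ, hφ⟩
    exact forward_dir G f hf φ hφ
  · rintro ⟨N, hN, ψ, hψ⟩
    exact backward_dir G f N hN.1 ψ hψ
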